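/- Let p ≥ 2, ℓ ≥ 0, let Λ ∈ ℝ^{p×p} be strictly lower triangular (Λ_{ij} = 0 whenever i ≤ j), let Γ ∈ ℝ^{p×ℓ}, and let S ⊆ {1,…,ℓ} be such that Γ_{1,j} = 0 for all j ∉ S. Define B = (I_p − Λ)^{-1}(I_p | Γ) ∈ ℝ^{p×(p+ℓ)}, and set Λ' = Λ_{2:,2:} (delete first row and column of Λ), Γ' = the submatrix of Γ consisting of rows 2,…,p and the columns with index not in S, and B' = (I_{p−1} − Λ')^{-1}(I_{p−1} | Γ'). Then B' equals the submatrix of B obtained by deleting the first row and deleting the columns with indices in {1} ∪ {p + j : j ∈ S}. -/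

import Mathlib

/-- Lemma 4.3 (core matrix identity): if node `1` is a source whose latent parents are
indexed by `S` (i.e. `Γ_{1,j} = 0` for `j ∉ S`), then the path matrix
`B' = (I − Λ')⁻¹ (I | Γ')` of the reduced model (first observed variable and the latents
in `S` deleted) equals the submatrix of `B = (I − Λ)⁻¹ (I | Γ)` obtained by deleting the
first row and the columns for variable `1` and the latents in `S`. -/
theorem reduced_path_matrix_is_submatrix
    (p ℓ : ℕ) (hp : 2 ≤ p)
    (Λ : Matrix (Fin p) (Fin p) ℝ) (hΛ : ∀ i j : Fin p, i ≤ j → Λ i j = 0)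
    (Γ : Matrix (Fin p) (Fin ℓ) ℝ)
    (S : Finset (Fin ℓ))
    (hS : ∀ j ∉ S, Γ (⟨0, by omega⟩ : Fin p) j = 0) :
    (1 - Λ.submatrix
        (fun i : Fin (p - 1) => (⟨i.1 + 1, by have := i.isLt; omega⟩ : Fin p))
        (fun i : Fin (p - 1) => (⟨i.1 + 1, by have := i.isLt; omega⟩ : Fin p)))⁻¹ *
      Matrix.fromCols 1
        (Matrix.of fun (i : Fin (p - 1)) (j : {j : Fin ℓ // j ∉ S}) =>
          Γ (⟨i.1 + 1, by have := i.isLt; omega⟩ : Fin p) j.1)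
    = ((1 - Λ)⁻¹ * Matrix.fromCols 1 Γ).submatrix
        (fun i : Fin (p - 1) => (⟨i.1 + 1, by have := i.isLt; omega⟩ : Fin p))
        (Sum.map (fun i : Fin (p - 1) => (⟨i.1 + 1, by have := i.isLt; omega⟩ : Fin p))
          (fun j : {j : Fin ℓ // j ∉ S} => j.1)) := by
  obtain ⟨q, rfl⟩ : ∃ q, p = q + 1 := ⟨p - 1, by omega⟩
  set A := (1 - Λ)⁻¹ with hA
  set s : Fin (q + 1 - 1) → Fin (q + 1) := fun i => ⟨i.1 + 1, by have := i.isLt; omega⟩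
    with hsdef
  have hsinj : Function.Injective s := by
    intro a b hab
    simpa [s, Fin.ext_iff] using hab
  have hΛ0 : ∀ m, Λ 0 m = 0 := fun m => hΛ 0 m (Fin.zero_le m)
  have hdet : (1 - Λ).det = 1 := by
    rw [Matrix.det_of_lowerTriangular (1 - Λ) (fun i j hij => by
      have hij' : i < j := hij
      simp [Matrix.sub_apply, Matrix.one_apply, hΛ i j hij'.le, hij'.ne])]
    simp [Matrix.sub_apply, hΛ _ _ (le_refl _)]
  have hU : IsUnit (1 - Λ).det := by rw [hdet]; exact isUnit_one
  have hinv : (1 - Λ) * A = 1 := Matrix.mul_nonsing_inv _ hU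
  have hrow : ∀ k : Fin (q+1), A 0 k = (1 : Matrix (Fin (q+1)) (Fin (q+1)) ℝ) 0 k := by
    intro k
    have h := congrFun (congrFun hinv 0) k
    rw [Matrix.mul_apply] at h
    simpa [Matrix.sub_apply, hΛ0, Matrix.one_apply, Finset.sum_ite_eq] using h
  have hrow0 : ∀ k : Fin (q + 1 - 1), A 0 (s k) = 0 := by
    intro k
    rw [hrow]
    simp [Matrix.one_apply, s, Fin.ext_iff]
  have key : (1 - Λ.submatrix s s) * A.submatrix s s = 1 := by
    ext i j
    have h := congrFun (congrFun hinv (s i)) (s j)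
    rw [Matrix.mul_apply, Fin.sum_univ_succ] at h
    rw [hrow0 j, mul_zero, zero_add] at h
    rw [Matrix.mul_apply]
    have hterm : ∀ k : Fin (q + 1 - 1),
        (1 - Λ.submatrix s s) i k * A.submatrix s s k j
        = (1 - Λ) (s i) (s k) * A (s k) (s j) := by
      intro k
      simp only [Matrix.sub_apply, Matrix.one_apply, Matrix.submatrix_apply, hsinj.eq_iff]
    rw [Finset.sum_congr rfl (fun k _ => hterm k)]
    have hone : (1 : Matrix (Fin (q+1)) (Fin (q+1)) ℝ) (s i) (s j)
        = (1 : Matrix (Fin (q+1-1)) (Fin (q+1-1)) ℝ) i j := by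
      simp [Matrix.one_apply, hsinj.eq_iff]
    rw [← hone, ← h]
    apply Finset.sum_congr rfl
    intro k _
    have : (Fin.succ k : Fin (q+1)) = s k := by simp [s, Fin.ext_iff]
    rw [this]
  have hinv' : (1 - Λ.submatrix s s)⁻¹ = A.submatrix s s := Matrix.inv_eq_right_inv key
  rw [hinv']
  ext i j
  cases j with
  | inl j =>
    simp [Matrix.mul_apply, Matrix.one_apply, mul_ite, mul_one, mul_zero,
      Finset.sum_ite_eq', hsinj.eq_iff]
  | inr j =>
    simp only [Matrix.mul_apply, Matrix.submatrix_apply, Sum.map_inr,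
      Matrix.fromCols_apply_inr, Matrix.of_apply]
    rw [Fin.sum_univ_succ]
    have h0 : Γ 0 j.1 = 0 := by
      have := hS j.1 j.2
      convert this using 2
      simp [Fin.ext_iff]
    rw [h0, mul_zero, zero_add]
    apply Finset.sum_congr rfl
    intro k _
    have : (Fin.succ k : Fin (q+1)) = s k := by simp [s, Fin.ext_iff]
    rw [this]
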